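/- Let G be a GFP sequence of Fibonacci type. Then for every integer n ≥ 1, Σ_{j=2}^{2n+1} I(j)·G(j)² = Σ_{j=1}^{n} G(4j+1), where I(j) = g if j is even and I(j) = 1 if j is odd. -/

import Mathlib

open Polynomial Finset

theorem GFP_fib_type_square_sum_I (d g : Polynomial ℤ) (hd : d ≠ 0) (hg : g ≠ 0)
    (G : ℕ → Polynomial ℤ) (h0 : G 0 = 0) (h1 : G 1 = 1)
    (hrec : ∀ n : ℕ, 2 ≤ n → G n = d * G (n - 1) + g * G (n - 2))
    (n : ℕ) (hn : 1 ≤ n) :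
    ∑ j ∈ Finset.Icc 2 (2 * n + 1), (if Even j then g else 1) * G j ^ 2 =
      ∑ j ∈ Finset.Icc 1 n, G (4 * j + 1) := by
  have h2 : G 2 = d := by
    have := hrec 2 (by norm_num)
    simpa [h0, h1] using this
  have add : ∀ b a, G (a + b + 1) = G (a + 1) * G (b + 1) + g * G a * G b := by
    intro b
    induction b using Nat.twoStepInduction with
    | zero => intro a; simp [h0, h1]
    | one =>
      intro a
      have h := hrec (a + 2) (by omega)
      simp only [show a + 2 - 1 = a + 1 from rfl, show a + 2 - 2 = a from rfl] at h
      rw [show a + 1 + 1 = a + 2 from rfl, h, h2, h1]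
      ring
    | more b ih1 ih2 =>
      intro a
      have h := hrec (a + (b + 2) + 1) (by omega)
      simp only [show a + (b + 2) + 1 - 1 = a + (b + 1) + 1 by omega,
        show a + (b + 2) + 1 - 2 = a + b + 1 by omega] at h
      have hb3 := hrec (b + 2 + 1) (by omega)
      have hb2 := hrec (b + 2) (by omega)
      simp only [show b + 2 + 1 - 1 = b + 2 from rfl, show b + 2 + 1 - 2 = b + 1 from rfl,
        show b + 2 - 1 = b + 1 from rfl, show b + 2 - 2 = b from rfl] at hb3 hb2
      rw [h, ih2 a, ih1 a, hb3, hb2]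
      ring
  have key : ∀ m, G (2 * m + 1) = G (m + 1) ^ 2 + g * G m ^ 2 := by
    intro m
    have := add m m
    rw [show m + m = 2 * m by ring] at this
    rw [this]; ring
  induction n, hn using Nat.le_induction with
  | base =>
    rw [show (2 : ℕ) * 1 + 1 = 3 from rfl]
    rw [show Finset.Icc 2 3 = {2, 3} from rfl, show Finset.Icc 1 1 = {1} from rfl]
    have := key 2
    norm_num at this ⊢
    rw [this]; ring
  | succ n hn ih =>
    rw [show 2 * (n + 1) + 1 = 2 * n + 2 + 1 by ring,
      Finset.sum_Icc_succ_top (by omega : 2 ≤ 2 * n + 2 + 1),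
      Finset.sum_Icc_succ_top (by omega : 2 ≤ 2 * n + 2),
      Finset.sum_Icc_succ_top (by omega : 1 ≤ n + 1), ih]
    have hk := key (2 * n + 2)
    rw [show 2 * (2 * n + 2) + 1 = 4 * (n + 1) + 1 by ring,
      show 2 * n + 2 + 1 = 2 * n + 3 from rfl] at hk
    have he : Even (2 * n + 2) := ⟨n + 1, by ring⟩
    have ho : ¬ Even (2 * n + 2 + 1) := by simp [Nat.even_add_one, he]
    rw [if_pos he, if_neg ho, hk]
    ring
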